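/- arXiv:2306.02641 — 3 statements merged into one kernel-verified Lean document; each statement's English description precedes it below -/
import Mathlib

section
/- The series identity ∑_{k=0}^∞ (C(2k,k)·C(4k,2k)/(-192)^k)·(2H_{4k} - H_{2k}) = (1/2)·log(3/4) · ∑_{k=0}^∞ C(2k,k)·C(4k,2k)/(-192)^k holds, both series being convergent. -/
/-- The `n`-th harmonic number `H_n = ∑_{i=1}^n 1/i`. -/
noncomputable def harm (n : ℕ) : ℝ := ∑ i ∈ Finset.range n, 1 / (i + 1 : ℝ)

/-!
Write `B k = C(2k,k) C(4k,2k)`. The series `∑ (-1/3)^(k+1)/(k+1)` sums to `log(3/4)`, and its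
Cauchy product with `∑ B k / (-192)^k` is `∑_{n ≥ 1} (-192)^(-n) ∑_{j=1}^n 64^j/j · B (n-j)`.
So it suffices to show `∑_{j=1}^n 64^j/j · B (n-j) = 2 B n (2 H_{4n} - H_{2n})`. Both sides satisfy
`(n+1)² R (n+1) = 4(4n+1)(4n+3) R n + 64(2n+1) B n`. For the right side this follows from
`(n+1)² B (n+1) = 4(4n+1)(4n+3) B n`. For the left side, the difference of the two sums telescopes,
with Gosper certificate `64^(k+1) (2n+1-k) B (n-k)`.
-/

open Finset

def binom24 (k : ℕ) : ℕ := k.centralBinom * (2 * k).centralBinom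

lemma cast_binom24 (k : ℕ) :
    (binom24 k : ℝ) = (Nat.choose (2 * k) k : ℝ) * (Nat.choose (4 * k) (2 * k) : ℝ) := by
  rw [binom24, Nat.centralBinom_eq_two_mul_choose, Nat.centralBinom_eq_two_mul_choose,
    ← mul_assoc]
  push_cast
  ring_nf

lemma binom24_zero : binom24 0 = 1 := by simp [binom24]

lemma binom24_succ (k : ℕ) :
    (k + 1) ^ 2 * binom24 (k + 1) = 4 * (4 * k + 1) * (4 * k + 3) * binom24 k := by
  have h₁ := Nat.succ_mul_centralBinom_succ k
  have h₂ := Nat.succ_mul_centralBinom_succ (2 * k)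
  have h₃ := Nat.succ_mul_centralBinom_succ (2 * k + 1)
  rw [show 2 * (2 * k + 1) + 1 = 4 * k + 3 by ring,
    show 2 * k + 1 + 1 = 2 * (k + 1) by ring] at h₃
  unfold binom24
  linear_combination (k + 1) * (2 * (k + 1)).centralBinom * h₁
    + 2 * (4 * k + 3) * k.centralBinom * h₂ + (2 * k + 1) * k.centralBinom * h₃

lemma binom24_le (k : ℕ) : binom24 k ≤ 64 ^ k :=
  calc binom24 k ≤ 4 ^ k * 4 ^ (2 * k) :=
        Nat.mul_le_mul (Nat.centralBinom_le_four_pow k) (Nat.centralBinom_le_four_pow (2 * k))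
    _ = 64 ^ k := by rw [pow_mul, ← mul_pow]; norm_num

noncomputable def harm42 (n : ℕ) : ℝ := 2 * harm (4 * n) - harm (2 * n)

lemma harm_succ (n : ℕ) : harm (n + 1) = harm n + 1 / (n + 1) := by
  simp [harm, sum_range_succ]

lemma harm42_succ (n : ℕ) :
    harm42 (n + 1) = harm42 n + 2 / (4 * n + 1) + 2 / (4 * n + 3) := by
  rw [harm42, harm42, show 4 * (n + 1) = 4 * n + 1 + 1 + 1 + 1 by ring,
    show 2 * (n + 1) = 2 * n + 1 + 1 by ring]
  simp only [harm_succ]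
  push_cast
  field_simp
  ring

/-- The coefficient of `x ^ n` in `-log (1 - 64 x) * ∑ binom24 k * x ^ k`. -/
noncomputable def logConv (n : ℕ) : ℝ :=
  ∑ k ∈ range n, 64 ^ (k + 1) / (k + 1) * (binom24 (n - 1 - k) : ℝ)

lemma logConv_telescope {n k : ℕ} (hk : k < n) :
    (n + 1) ^ 2 * (64 ^ (k + 1) / (k + 1) * (binom24 (n - k) : ℝ))
        - 4 * (4 * n + 1) * (4 * n + 3) * (64 ^ (k + 1) / (k + 1) * (binom24 (n - 1 - k) : ℝ))
      = 64 ^ (k + 1) * (2 * n + 1 - k) * binom24 (n - k)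
        - 64 ^ (k + 1 + 1) * (2 * n + 1 - (k + 1 : ℕ)) * binom24 (n - (k + 1)) := by
  obtain ⟨l, rfl⟩ : ∃ l, n = k + l + 1 := ⟨n - 1 - k, by omega⟩
  rw [show k + l + 1 - k = l + 1 by omega, show k + l + 1 - 1 - k = l by omega,
    show k + l + 1 - (k + 1) = l by omega]
  have h : ((l : ℝ) + 1) ^ 2 * binom24 (l + 1) = 4 * (4 * l + 1) * (4 * l + 3) * binom24 l := by
    exact_mod_cast binom24_succ l
  push_cast
  field_simp
  linear_combination 64 ^ (k + 1) * h

lemma logConv_succ (n : ℕ) :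
    ((n : ℝ) + 1) ^ 2 * logConv (n + 1)
      = 4 * (4 * n + 1) * (4 * n + 3) * logConv n + 64 * (2 * n + 1) * binom24 n := by
  set G : ℕ → ℝ := fun k => 64 ^ (k + 1) * (2 * n + 1 - k) * binom24 (n - k)
  have htel := sum_range_sub' G n
  rw [← sum_congr rfl fun k hk => logConv_telescope (mem_range.mp hk), sum_sub_distrib] at htel
  calc ((n : ℝ) + 1) ^ 2 * logConv (n + 1)
      = ∑ k ∈ range n, (n + 1) ^ 2 * (64 ^ (k + 1) / (k + 1) * (binom24 (n - k) : ℝ))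
          + (n + 1) * 64 ^ (n + 1) := by
        rw [logConv, sum_range_succ, mul_add, mul_sum]
        simp only [Nat.add_sub_cancel, Nat.sub_self, binom24_zero, Nat.cast_one, mul_one]
        field_simp
    _ = 4 * (4 * n + 1) * (4 * n + 3) * logConv n + 64 * (2 * n + 1) * binom24 n := by
        rw [logConv, mul_sum, sub_eq_iff_eq_add'.mp htel]
        simp only [G, zero_add, pow_one, CharP.cast_eq_zero, sub_zero, tsub_zero, tsub_self,
          binom24_zero, Nat.cast_one, mul_one]
        ring

lemma logConv_eq (n : ℕ) : logConv n = 2 * binom24 n * harm42 n := by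
  induction n with
  | zero => simp [logConv, harm42, harm]
  | succ n ih =>
    have h : ((n : ℝ) + 1) ^ 2 * binom24 (n + 1) = 4 * (4 * n + 1) * (4 * n + 3) * binom24 n := by
      exact_mod_cast binom24_succ n
    apply mul_left_cancel₀ (pow_ne_zero 2 (n.cast_add_one_ne_zero (R := ℝ)))
    rw [logConv_succ, ih, harm42_succ]
    linear_combination (norm := skip) -2 * (harm42 n + 2 / (4 * n + 1) + 2 / (4 * n + 3)) * h
    field_simp
    ring

lemma abs_binom24_div_le (k : ℕ) : |(binom24 k : ℝ) / (-192) ^ k| ≤ (1 / 3) ^ k := by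
  rw [abs_div, abs_pow, Nat.abs_cast, div_le_iff₀ (by positivity), ← mul_pow]
  norm_num
  exact_mod_cast binom24_le k

lemma summable_norm_binom24_div : Summable fun k => ‖(binom24 k : ℝ) / (-192) ^ k‖ :=
  .of_nonneg_of_le (fun _ => norm_nonneg _) abs_binom24_div_le
    (summable_geometric_of_lt_one (by norm_num) (by norm_num))

lemma summable_norm_pow_succ_div {x : ℝ} (hx : |x| < 1) :
    Summable fun k : ℕ => ‖x ^ (k + 1) / (k + 1)‖ := by
  refine (Real.hasSum_pow_div_log_of_abs_lt_one (x := |x|) (by rwa [abs_abs])).summable.congr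
    fun k => ?_
  rw [Real.norm_eq_abs, abs_div, abs_pow, abs_of_pos (by positivity : (0 : ℝ) < k + 1)]

lemma sum_log_mul_binom24_div (n : ℕ) :
    ∑ k ∈ range (n + 1),
        (-1 / 3 : ℝ) ^ (k + 1) / (k + 1) * ((binom24 (n - k) : ℝ) / (-192) ^ (n - k))
      = 2 * ((binom24 (n + 1) : ℝ) / (-192) ^ (n + 1) * harm42 (n + 1)) := by
  have hterm : ∀ k ∈ range (n + 1),
      (-1 / 3 : ℝ) ^ (k + 1) / (k + 1) * ((binom24 (n - k) : ℝ) / (-192) ^ (n - k))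
        = 64 ^ (k + 1) / (k + 1) * (binom24 (n + 1 - 1 - k) : ℝ) / (-192) ^ (n + 1) := by
    intro k hk
    obtain ⟨l, rfl⟩ : ∃ l, n = k + l := ⟨n - k, by have := mem_range.mp hk; omega⟩
    rw [show k + l + 1 - 1 - k = l by omega, show k + l - k = l by omega,
      show (-1 / 3 : ℝ) = 64 / -192 by norm_num, div_pow]
    field_simp
    ring
  rw [sum_congr rfl hterm, ← sum_div, ← logConv, logConv_eq]
  ring

theorem stmt_1 :
    Summable (fun k : ℕ =>
      ((Nat.choose (2 * k) k : ℝ) * (Nat.choose (4 * k) (2 * k) : ℝ) / (-192 : ℝ) ^ k) *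
        (2 * harm (4 * k) - harm (2 * k))) ∧
    Summable (fun k : ℕ =>
      (Nat.choose (2 * k) k : ℝ) * (Nat.choose (4 * k) (2 * k) : ℝ) / (-192 : ℝ) ^ k) ∧
    ∑' k : ℕ, ((Nat.choose (2 * k) k : ℝ) * (Nat.choose (4 * k) (2 * k) : ℝ) / (-192 : ℝ) ^ k) *
        (2 * harm (4 * k) - harm (2 * k)) =
      (1 / 2 : ℝ) * Real.log (3 / 4) *
        ∑' k : ℕ, (Nat.choose (2 * k) k : ℝ) * (Nat.choose (4 * k) (2 * k) : ℝ) / (-192 : ℝ) ^ k := by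
  simp only [← cast_binom24, ← harm42.eq_def]
  have hlog : ∑' k : ℕ, (-1 / 3 : ℝ) ^ (k + 1) / (k + 1) = Real.log (3 / 4) := by
    rw [(Real.hasSum_pow_div_log_of_abs_lt_one (by norm_num)).tsum_eq, ← Real.log_inv]
    norm_num
  have hprod := hasSum_sum_range_mul_of_summable_norm
    (summable_norm_pow_succ_div (x := -1 / 3) (by norm_num)) summable_norm_binom24_div
  simp only [sum_log_mul_binom24_div, hlog] at hprod
  have hshift := hprod.mul_left (1 / 2)
  simp only [← mul_assoc, one_div_mul_cancel (two_ne_zero (α := ℝ)), one_mul] at hshift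
  have hsum : HasSum (fun k => (binom24 k : ℝ) / (-192) ^ k * harm42 k)
      (1 / 2 * Real.log (3 / 4) * ∑' k : ℕ, (binom24 k : ℝ) / (-192) ^ k) := by
    rw [← hasSum_nat_add_iff' 1]
    simpa [harm42, harm] using hshift
  exact ⟨hsum.summable, summable_norm_binom24_div.of_norm, hsum.tsum_eq⟩
end

section
/- The series identity ∑_{k=0}^∞ (C(2k,k)·C(4k,2k)/576^k)·(2H_{4k} - H_{2k}) = (1/2)·log(9/8) · ∑_{k=0}^∞ C(2k,k)·C(4k,2k)/576^k holds, both series being convergent. -/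
open Finset

/-- `b k = C(2k,k) C(4k,2k) / 64^k`. -/
noncomputable def bb (k : ℕ) : ℝ :=
  ((2 * k).choose k : ℝ) * ((4 * k).choose (2 * k) : ℝ) / 64 ^ k

/-- `h k = 2 H_{4k} - H_{2k}`. -/
noncomputable def hh (k : ℕ) : ℝ := 2 * harm (4 * k) - harm (2 * k)

lemma cb4 (k : ℕ) : ((4 * k).choose (2 * k)) = Nat.centralBinom (2 * k) := by
  unfold Nat.centralBinom; congr 1; ring

lemma cb2 (k : ℕ) : ((2 * k).choose k) = Nat.centralBinom k := rfl

lemma bb_pos (k : ℕ) : 0 < bb k := by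
  have h1 : 0 < ((2 * k).choose k : ℝ) := by
    exact_mod_cast Nat.choose_pos (by omega)
  have h2 : 0 < ((4 * k).choose (2 * k) : ℝ) := by
    exact_mod_cast Nat.choose_pos (by omega)
  have : (0:ℝ) < 64 ^ k := by positivity
  exact div_pos (mul_pos h1 h2) this

lemma bb_rec (k : ℕ) :
    16 * ((k : ℝ) + 1) ^ 2 * bb (k + 1) = (4 * (k:ℝ) + 1) * (4 * (k:ℝ) + 3) * bb k := by
  have e1 : ((k:ℝ) + 1) * (Nat.centralBinom (k+1) : ℝ)
      = 2 * (2 * (k:ℝ) + 1) * (Nat.centralBinom k : ℝ) := by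
    exact_mod_cast congrArg (Nat.cast : ℕ → ℝ) (Nat.succ_mul_centralBinom_succ k)
  have e2 : (2 * (k:ℝ) + 1) * (Nat.centralBinom (2*k+1) : ℝ)
      = 2 * (4 * (k:ℝ) + 1) * (Nat.centralBinom (2*k) : ℝ) := by
    have := congrArg (Nat.cast : ℕ → ℝ) (Nat.succ_mul_centralBinom_succ (2*k))
    push_cast at this
    linarith [this]
  have e3 : (2 * (k:ℝ) + 2) * (Nat.centralBinom (2*k+2) : ℝ)
      = 2 * (4 * (k:ℝ) + 3) * (Nat.centralBinom (2*k+1) : ℝ) := by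
    have := congrArg (Nat.cast : ℕ → ℝ) (Nat.succ_mul_centralBinom_succ (2*k+1))
    push_cast at this
    linarith [this]
  set A := (Nat.centralBinom (k+1) : ℝ)
  set B := (Nat.centralBinom k : ℝ)
  set C := (Nat.centralBinom (2*k+2) : ℝ)
  set D := (Nat.centralBinom (2*k+1) : ℝ)
  set E := (Nat.centralBinom (2*k) : ℝ)
  have h2k1 : (2 * (k:ℝ) + 1) ≠ 0 := by positivity
  have Hc : (2 * (k:ℝ) + 1) * (16 * ((k:ℝ)+1)^2 * (A * C))
      = (2 * (k:ℝ) + 1) * (64 * ((4*(k:ℝ)+1) * (4*(k:ℝ)+3)) * (B * E)) := by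
    linear_combination (16*(2*(k:ℝ)+1)*((k:ℝ)+1)*C) * e1
      + (16*(2*(k:ℝ)+1)^2*B) * e3 + (32*(2*(k:ℝ)+1)*(4*(k:ℝ)+3)*B) * e2
  have H : 16 * ((k:ℝ)+1)^2 * (A * C)
      = 64 * ((4*(k:ℝ)+1) * (4*(k:ℝ)+3)) * (B * E) := mul_left_cancel₀ h2k1 Hc
  have hC1 : ((4 * (k+1)).choose (2 * (k+1))) = Nat.centralBinom (2*k+2) := by
    have h := cb4 (k+1)
    rw [show 2*(k+1) = 2*k+2 by ring] at h
    exact h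
  have hA1 : ((2 * (k+1)).choose (k+1)) = Nat.centralBinom (k+1) := rfl
  have hC0 : ((4 * k).choose (2 * k)) = Nat.centralBinom (2*k) := cb4 k
  have hA0 : ((2 * k).choose k) = Nat.centralBinom k := rfl
  rw [bb, bb, hC1, hA1, hC0, hA0]
  have h64 : ((64:ℝ)) ^ k ≠ 0 := by positivity
  rw [pow_succ]
  field_simp
  linear_combination ((64:ℝ)^k) * H

lemma harm_succ4 (k : ℕ) :
    harm (4 * (k+1)) = harm (4 * k)
      + 1/(4*(k:ℝ)+1) + 1/(4*(k:ℝ)+2) + 1/(4*(k:ℝ)+3) + 1/(4*(k:ℝ)+4) := by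
  have h : 4 * (k+1) = (4*k) + 1 + 1 + 1 + 1 := by ring
  rw [h]
  unfold harm
  rw [Finset.sum_range_succ, Finset.sum_range_succ, Finset.sum_range_succ,
    Finset.sum_range_succ]
  push_cast
  ring

lemma harm_succ2 (k : ℕ) :
    harm (2 * (k+1)) = harm (2 * k) + 1/(2*(k:ℝ)+1) + 1/(2*(k:ℝ)+2) := by
  have h : 2 * (k+1) = (2*k) + 1 + 1 := by ring
  rw [h]
  unfold harm
  rw [Finset.sum_range_succ, Finset.sum_range_succ]
  push_cast
  ring

lemma hh_rec (k : ℕ) :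
    (4*(k:ℝ)+1) * (4*(k:ℝ)+3) * hh (k+1)
      = (4*(k:ℝ)+1) * (4*(k:ℝ)+3) * hh k + (16*(k:ℝ)+8) := by
  unfold hh
  rw [harm_succ4, harm_succ2]
  have h1 : (4*(k:ℝ)+1) ≠ 0 := by positivity
  have h2 : (4*(k:ℝ)+2) ≠ 0 := by positivity
  have h3 : (4*(k:ℝ)+3) ≠ 0 := by positivity
  have h4 : (4*(k:ℝ)+4) ≠ 0 := by positivity
  have h5 : (2*(k:ℝ)+1) ≠ 0 := by positivity
  have h6 : (2*(k:ℝ)+2) ≠ 0 := by positivity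
  field_simp
  ring

/-- `R k = ∑_{j<k} b_j / (k - j)`. -/
noncomputable def Rr (k : ℕ) : ℝ := ∑ j ∈ Finset.range k, bb j / ((k:ℝ) - j)

lemma Rr_rec (k : ℕ) :
    16 * ((k:ℝ)+1)^2 * Rr (k+1)
      = (4*(k:ℝ)+1) * (4*(k:ℝ)+3) * Rr k + (32*(k:ℝ)+16) * bb k := by
  set G : ℕ → ℝ := fun j => -(16 * (j:ℝ)^2 * bb j) / ((k:ℝ) + 1 - j) with hG
  have hsplit : Rr (k+1) = (∑ j ∈ Finset.range k, bb j / ((k:ℝ) + 1 - j)) + bb k := by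
    rw [Rr, Finset.sum_range_succ]
    have h1 : (((k:ℕ)+1 : ℕ):ℝ) - (k:ℝ) = 1 := by push_cast; ring
    push_cast
    norm_num
  have tele : ∑ j ∈ Finset.range k, (G (j+1) - G j) = G k - G 0 :=
    Finset.sum_range_sub G k
  have per : ∀ j ∈ Finset.range k,
      16 * ((k:ℝ)+1)^2 * (bb j / ((k:ℝ)+1-j))
        - (4*(k:ℝ)+1) * (4*(k:ℝ)+3) * (bb j / ((k:ℝ)-j)) = G (j+1) - G j := by
    intro j hj
    have hjk : j < k := Finset.mem_range.mp hj
    have hjkR : (j:ℝ) < (k:ℝ) := by exact_mod_cast hjk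
    have d1 : (k:ℝ) - j ≠ 0 := by intro h; linarith [sub_pos.mpr hjkR]
    have d2 : (k:ℝ) + 1 - j ≠ 0 := by intro h; nlinarith [hjkR]
    have hb := bb_rec j
    have hG1 : G (j+1) = -((4*(j:ℝ)+1) * (4*(j:ℝ)+3) * bb j) / ((k:ℝ) - j) := by
      simp only [hG]
      push_cast
      rw [show (k:ℝ) + 1 - ((j:ℝ)+1) = (k:ℝ) - j by ring]
      rw [show -(16 * ((j:ℝ)+1)^2 * bb (j+1)) = -((4*(j:ℝ)+1) * (4*(j:ℝ)+3) * bb j) by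
        linear_combination -hb]
    rw [hG1]
    simp only [hG]
    field_simp
    ring
  have sum_eq : ∑ j ∈ Finset.range k,
      (16 * ((k:ℝ)+1)^2 * (bb j / ((k:ℝ)+1-j))
        - (4*(k:ℝ)+1) * (4*(k:ℝ)+3) * (bb j / ((k:ℝ)-j))) = G k - G 0 := by
    rw [Finset.sum_congr rfl per]; exact tele
  have hGk : G k = -(16 * (k:ℝ)^2 * bb k) := by
    simp only [hG]
    rw [show (k:ℝ) + 1 - (k:ℝ) = 1 by ring, div_one]
  have hG0 : G 0 = 0 := by simp [hG]
  rw [hsplit, Rr]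
  rw [Finset.sum_sub_distrib, ← Finset.mul_sum, ← Finset.mul_sum] at sum_eq
  rw [hGk, hG0] at sum_eq
  rw [mul_add]
  nlinarith [sum_eq]

lemma key (k : ℕ) : 2 * (bb k * hh k) = Rr k := by
  induction k with
  | zero =>
    have h0 : hh 0 = 0 := by simp [hh, harm]
    simp [h0, Rr]
  | succ k ih =>
    have h16 : (16 * ((k:ℝ)+1)^2) ≠ 0 := by positivity
    have e1 : 16 * ((k:ℝ)+1)^2 * (2 * (bb (k+1) * hh (k+1)))
        = (4*(k:ℝ)+1) * (4*(k:ℝ)+3) * (2 * (bb k * hh k)) + (32*(k:ℝ)+16) * bb k := by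
      linear_combination (2 * hh (k+1)) * bb_rec k + (2 * bb k) * hh_rec k
    rw [ih] at e1
    rw [← Rr_rec k] at e1
    exact mul_left_cancel₀ h16 e1

/-- the `576` series term. -/
noncomputable def ww (k : ℕ) : ℝ :=
  ((2 * k).choose k : ℝ) * ((4 * k).choose (2 * k) : ℝ) / 576 ^ k

lemma ww_eq (k : ℕ) : ww k = bb k * (1/9 : ℝ) ^ k := by
  unfold ww bb
  have h9 : ((1:ℝ)/9)^k = 1/9^k := by rw [div_pow, one_pow]
  rw [h9, div_mul_div_comm, mul_one, ← mul_pow]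
  norm_num

lemma choose_le_pow2 (n : ℕ) : ((2*n).choose n) ≤ 2 ^ (2*n) := by
  calc (2*n).choose n ≤ ∑ i ∈ Finset.range (2*n+1), (2*n).choose i :=
        Finset.single_le_sum (fun i _ => Nat.zero_le _) (Finset.mem_range.mpr (by omega))
    _ = 2 ^ (2*n) := Nat.sum_range_choose (2*n)

lemma bb_le_one (k : ℕ) : bb k ≤ 1 := by
  unfold bb
  rw [div_le_one (by positivity)]
  have h1 : ((2*k).choose k : ℝ) ≤ 2 ^ (2*k) := by exact_mod_cast choose_le_pow2 k
  have h2 : ((4*k).choose (2*k) : ℝ) ≤ 2 ^ (4*k) := by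
    have := choose_le_pow2 (2*k)
    rw [show 2*(2*k) = 4*k by ring] at this
    exact_mod_cast this
  have h3 : (0:ℝ) ≤ ((2*k).choose k : ℝ) := by positivity
  have h4 : (0:ℝ) ≤ (2:ℝ) ^ (2*k) := by positivity
  calc ((2*k).choose k : ℝ) * ((4*k).choose (2*k) : ℝ)
      ≤ 2 ^ (2*k) * 2 ^ (4*k) := by
        apply mul_le_mul h1 h2 (by positivity) h4
    _ = 64 ^ k := by
        rw [← pow_add]
        rw [show 2*k + 4*k = 6*k by ring]
        rw [show (64:ℝ) = 2^6 by norm_num, ← pow_mul]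
    _ ≤ 64 ^ k := le_refl _

lemma ww_pos (k : ℕ) : 0 < ww k := by
  rw [ww_eq]; exact mul_pos (bb_pos k) (by positivity)

lemma ww_le (k : ℕ) : ww k ≤ (1/9 : ℝ) ^ k := by
  rw [ww_eq]
  calc bb k * (1/9:ℝ)^k ≤ 1 * (1/9:ℝ)^k := by
        apply mul_le_mul_of_nonneg_right (bb_le_one k) (by positivity)
    _ = (1/9:ℝ)^k := one_mul _

lemma harm_nonneg (n : ℕ) : 0 ≤ harm n := by
  unfold harm
  apply Finset.sum_nonneg
  intro i _
  positivity

lemma harm_le (n : ℕ) : harm n ≤ n := by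
  unfold harm
  calc ∑ i ∈ Finset.range n, 1/((i:ℝ)+1) ≤ ∑ _i ∈ Finset.range n, (1:ℝ) := by
        apply Finset.sum_le_sum
        intro i _
        rw [div_le_one (by positivity)]
        linarith [Nat.cast_nonneg (α := ℝ) i]
    _ = n := by simp

lemma harm_mono {m n : ℕ} (h : m ≤ n) : harm m ≤ harm n := by
  unfold harm
  apply Finset.sum_le_sum_of_subset_of_nonneg (Finset.range_subset_range.mpr h)
  intro i _ _
  positivity

lemma hh_nonneg (k : ℕ) : 0 ≤ hh k := by
  unfold hh
  have h1 := harm_mono (show 2*k ≤ 4*k by omega)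
  have h2 := harm_nonneg (4*k)
  linarith

lemma hh_le (k : ℕ) : hh k ≤ 8 * k := by
  unfold hh
  have h1 := harm_le (4*k)
  have h2 := harm_nonneg (2*k)
  have : ((4*k : ℕ):ℝ) = 4*(k:ℝ) := by push_cast; ring
  rw [this] at h1
  linarith

/-- log series term. -/
noncomputable def gg (m : ℕ) : ℝ := (1/9 : ℝ) ^ m / (2 * m)

lemma gg_zero : gg 0 = 0 := by simp [gg]

lemma gg_nonneg (m : ℕ) : 0 ≤ gg m := by
  unfold gg
  positivity

lemma gg_hasSum : HasSum gg ((1/2 : ℝ) * Real.log (9/8)) := by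
  have h : |(1/9 : ℝ)| < 1 := by rw [abs_of_pos (by norm_num)]; norm_num
  have h1 := (Real.hasSum_pow_div_log_of_abs_lt_one h).div_const 2
  have h2 : -Real.log (1 - 1/9) / 2 = (1/2:ℝ) * Real.log (9/8) := by
    rw [show (1:ℝ) - 1/9 = 8/9 by norm_num]
    rw [show (8/9 : ℝ) = (9/8)⁻¹ by norm_num, Real.log_inv]
    ring
  rw [h2] at h1
  have h3 : ∀ n : ℕ, gg (n+1) = (1/9:ℝ)^(n+1) / ((n:ℝ)+1) / 2 := by
    intro n
    unfold gg
    push_cast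
    rw [div_div]
    ring_nf
  have h4 : HasSum (fun n => gg (n+1)) ((1/2:ℝ) * Real.log (9/8)) := by
    refine HasSum.congr_fun h1 ?_  -- might not exist; fallback below
    intro n
    exact h3 n
  have := (hasSum_nat_add_iff (f := gg) 1).mp h4
  simpa [gg_zero] using this

lemma summable_ww : Summable ww := by
  apply Summable.of_nonneg_of_le (fun k => (ww_pos k).le) ww_le
  exact summable_geometric_of_lt_one (by norm_num) (by norm_num)

lemma summable_wh : Summable (fun k => ww k * hh k) := by
  have hs : Summable (fun k : ℕ => 8 * ((k:ℝ) * (1/9:ℝ)^k)) := by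
    have := summable_pow_mul_geometric_of_norm_lt_one (R := ℝ) 1
      (r := (1/9:ℝ)) (by rw [Real.norm_eq_abs, abs_of_pos] <;> norm_num)
    simpa using this.mul_left 8
  apply Summable.of_nonneg_of_le
    (fun k => mul_nonneg (ww_pos k).le (hh_nonneg k)) _ hs
  intro k
  calc ww k * hh k ≤ (1/9:ℝ)^k * (8*k) := by
        apply mul_le_mul (ww_le k) (hh_le k) (hh_nonneg k) (by positivity)
    _ = 8 * ((k:ℝ) * (1/9:ℝ)^k) := by ring

lemma coeff_identity (n : ℕ) :
    ∑ k ∈ Finset.range (n+1), ww k * gg (n - k) = ww n * hh n := by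
  rw [Finset.sum_range_succ]
  have hlast : ww n * gg (n - n) = 0 := by
    rw [Nat.sub_self, gg_zero, mul_zero]
  rw [hlast, add_zero]
  have per : ∀ k ∈ Finset.range n,
      ww k * gg (n - k) = ((1/9:ℝ)^n / 2) * (bb k / ((n:ℝ) - k)) := by
    intro k hk
    have hkn : k < n := Finset.mem_range.mp hk
    have hknR : (k:ℝ) < (n:ℝ) := by exact_mod_cast hkn
    have hd : (n:ℝ) - k ≠ 0 := by intro h; linarith [sub_pos.mpr hknR]
    have hcast : ((n - k : ℕ) : ℝ) = (n:ℝ) - k := by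
      rw [Nat.cast_sub hkn.le]
    have hpow : (1/9:ℝ)^k * (1/9:ℝ)^(n-k) = (1/9:ℝ)^n := by
      rw [← pow_add, Nat.add_sub_cancel' hkn.le]
    rw [ww_eq]
    unfold gg
    rw [hcast, ← hpow, div_mul_eq_div_div_swap]
    ring
  rw [Finset.sum_congr rfl per, ← Finset.mul_sum]
  have : (∑ j ∈ Finset.range n, bb j / ((n:ℝ) - j)) = Rr n := rfl
  rw [this, ← key n, ww_eq]
  ring

theorem stmt_4 :
    Summable (fun k : ℕ =>
      ((Nat.choose (2 * k) k : ℝ) * (Nat.choose (4 * k) (2 * k) : ℝ) / (576 : ℝ) ^ k) *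
        (2 * harm (4 * k) - harm (2 * k))) ∧
    Summable (fun k : ℕ =>
      (Nat.choose (2 * k) k : ℝ) * (Nat.choose (4 * k) (2 * k) : ℝ) / (576 : ℝ) ^ k) ∧
    ∑' k : ℕ, ((Nat.choose (2 * k) k : ℝ) * (Nat.choose (4 * k) (2 * k) : ℝ) / (576 : ℝ) ^ k) *
        (2 * harm (4 * k) - harm (2 * k)) =
      (1 / 2 : ℝ) * Real.log (9 / 8) *
        ∑' k : ℕ, (Nat.choose (2 * k) k : ℝ) * (Nat.choose (4 * k) (2 * k) : ℝ) / (576 : ℝ) ^ k := by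
  have hw : (fun k : ℕ =>
      (Nat.choose (2 * k) k : ℝ) * (Nat.choose (4 * k) (2 * k) : ℝ) / (576 : ℝ) ^ k) = ww := rfl
  have hwh : (fun k : ℕ =>
      ((Nat.choose (2 * k) k : ℝ) * (Nat.choose (4 * k) (2 * k) : ℝ) / (576 : ℝ) ^ k) *
        (2 * harm (4 * k) - harm (2 * k))) = fun k => ww k * hh k := rfl
  refine ⟨by rw [hwh]; exact summable_wh, by rw [hw]; exact summable_ww, ?_⟩
  have hnw : Summable (fun k => ‖ww k‖) := by
    simpa [Real.norm_eq_abs, abs_of_pos (ww_pos _)] using summable_ww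
  have hng : Summable (fun k => ‖gg k‖) := by
    simpa [Real.norm_eq_abs, abs_of_nonneg (gg_nonneg _)] using gg_hasSum.summable
  have cauchy := tsum_mul_tsum_eq_tsum_sum_range_of_summable_norm hnw hng
  have hggsum : ∑' m, gg m = (1/2:ℝ) * Real.log (9/8) := gg_hasSum.tsum_eq
  calc ∑' k : ℕ, ((Nat.choose (2 * k) k : ℝ) * (Nat.choose (4 * k) (2 * k) : ℝ) / (576 : ℝ) ^ k) *
        (2 * harm (4 * k) - harm (2 * k))
      = ∑' n : ℕ, ww n * hh n := by rw [hwh]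
    _ = ∑' n : ℕ, ∑ k ∈ Finset.range (n+1), ww k * gg (n - k) := by
        exact tsum_congr fun n => (coeff_identity n).symm
    _ = (∑' n, ww n) * ∑' n, gg n := cauchy.symm
    _ = (1 / 2 : ℝ) * Real.log (9 / 8) *
        ∑' k : ℕ, (Nat.choose (2 * k) k : ℝ) * (Nat.choose (4 * k) (2 * k) : ℝ) / (576 : ℝ) ^ k := by
        rw [hggsum, hw]; ring
end

section
/- Let a and b be positive real numbers and let x be a complex number with |x| > 1. Then ∑_{k=0}^∞ ((a)_k·(b)_k/((1)_k·(a+b)_k)) · (H_k(a−1) + H_k(b−1))/x^k = log(x/(x−1)) · ∑_{k=0}^∞ ((a)_k·(b)_k/((1)_k·(a+b)_k)) · 1/x^k, both series being convergent. -/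
/-- The Pochhammer symbol (rising factorial) `(y)_k = y(y+1)⋯(y+k-1)`. -/
noncomputable def poch (y : ℝ) (k : ℕ) : ℝ := ∏ i ∈ Finset.range k, (y + i)

/-- The generalized harmonic number `H_n(x) = ∑_{i=1}^n 1/(x+i)`. -/
noncomputable def harmGen (x : ℝ) (n : ℕ) : ℝ := ∑ i ∈ Finset.range n, 1 / (x + (i + 1 : ℝ))

noncomputable def cc (a b : ℝ) (k : ℕ) : ℝ :=
  poch a k * poch b k / (poch 1 k * poch (a + b) k)

noncomputable def rho (a b : ℝ) (k j : ℕ) : ℝ :=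
  -((j : ℝ) * ((a + b - 1) + j)) / (((k : ℝ) + 1) * ((a + b) + k) * ((k : ℝ) + 1 - j))

lemma poch_succ (y : ℝ) (k : ℕ) : poch y (k + 1) = poch y k * (y + k) :=
  Finset.prod_range_succ _ _

lemma poch_pos {y : ℝ} (hy : 0 < y) (k : ℕ) : 0 < poch y k :=
  Finset.prod_pos fun i _ => by positivity

lemma cc_zero (a b : ℝ) : cc a b 0 = 1 := by simp [cc, poch]

lemma cc_pos {a b : ℝ} (ha : 0 < a) (hb : 0 < b) (k : ℕ) : 0 < cc a b k :=
  div_pos (mul_pos (poch_pos ha k) (poch_pos hb k))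
    (mul_pos (poch_pos one_pos k) (poch_pos (by linarith) k))

lemma cc_succ {a b : ℝ} (ha : 0 < a) (hb : 0 < b) (k : ℕ) :
    cc a b (k + 1) = cc a b k * ((a + k) * (b + k) / ((1 + k) * ((a + b) + k))) := by
  have h1 := (poch_pos (y := 1) one_pos k).ne'
  have h2 := (poch_pos (y := a + b) (by linarith) k).ne'
  have h3 := (poch_pos ha k).ne'
  have h4 := (poch_pos hb k).ne'
  have h5 : (1 : ℝ) + k ≠ 0 := by positivity
  have h6 : (a + b) + (k : ℝ) ≠ 0 := by positivity
  unfold cc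
  rw [poch_succ, poch_succ, poch_succ, poch_succ]
  field_simp

lemma hg_succ (a : ℝ) (k : ℕ) :
    harmGen (a - 1) (k + 1) = harmGen (a - 1) k + 1 / (a + k) := by
  rw [harmGen, Finset.sum_range_succ, ← harmGen]
  norm_num

lemma step_lemma {a b : ℝ} (ha : 0 < a) (hb : 0 < b) {k j : ℕ} (hj : j < k) :
    cc a b j / ((k : ℝ) + 1 - j) =
      (cc a b (j + 1) * rho a b k (j + 1) - cc a b j * rho a b k j)
        + (a + k) * (b + k) / ((1 + k) * ((a + b) + k)) * (cc a b j / ((k : ℝ) - j)) := by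
  have hjk : (j : ℝ) < k := by exact_mod_cast hj
  have h1 : (1 : ℝ) + j ≠ 0 := by positivity
  have h2 : (a + b) + (j : ℝ) ≠ 0 := by positivity
  have h3 : (k : ℝ) + 1 ≠ 0 := by positivity
  have h4 : (a + b) + (k : ℝ) ≠ 0 := by positivity
  have h5 : (k : ℝ) + 1 - j ≠ 0 := by intro h; nlinarith
  have h6 : (k : ℝ) - j ≠ 0 := by intro h; nlinarith
  have h7 : (1 : ℝ) + k ≠ 0 := by positivity
  rw [cc_succ ha hb j]
  unfold rho
  push_cast
  rw [show (k : ℝ) + 1 - (j + 1) = k - j by ring]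
  field_simp
  ring

lemma key_s13 {a b : ℝ} (ha : 0 < a) (hb : 0 < b) :
    ∀ k : ℕ, ∑ j ∈ Finset.range k, cc a b j / ((k : ℝ) - j)
      = cc a b k * (harmGen (a - 1) k + harmGen (b - 1) k) := by
  intro k
  induction k with
  | zero => simp [harmGen]
  | succ k IH =>
    have h3 : (k : ℝ) + 1 ≠ 0 := by positivity
    have h4 : (a + b) + (k : ℝ) ≠ 0 := by positivity
    have hak : a + (k : ℝ) ≠ 0 := by positivity
    have hbk : b + (k : ℝ) ≠ 0 := by positivity
    have h7 : (1 : ℝ) + k ≠ 0 := by positivity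
    have hstep : ∀ j ∈ Finset.range k, cc a b j / ((k : ℝ) + 1 - j) =
        (cc a b (j + 1) * rho a b k (j + 1) - cc a b j * rho a b k j)
          + (a + k) * (b + k) / ((1 + k) * ((a + b) + k)) * (cc a b j / ((k : ℝ) - j)) :=
      fun j hj => step_lemma ha hb (Finset.mem_range.mp hj)
    have tele : ∑ j ∈ Finset.range k,
        (cc a b (j + 1) * rho a b k (j + 1) - cc a b j * rho a b k j)
        = cc a b k * rho a b k k - cc a b 0 * rho a b k 0 :=
      Finset.sum_range_sub (fun j => cc a b j * rho a b k j) k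
    have hrho0 : cc a b 0 * rho a b k 0 = 0 := by simp [rho]
    have hfin : cc a b k * rho a b k k + cc a b k
        = cc a b k * ((a + k) * (b + k) / ((1 + k) * ((a + b) + k)))
            * (1 / (a + k) + 1 / (b + k)) := by
      unfold rho
      have h5 : (k : ℝ) + 1 - k ≠ 0 := by norm_num
      field_simp
      ring
    rw [Finset.sum_range_succ]
    push_cast
    rw [Finset.sum_congr rfl hstep, Finset.sum_add_distrib, tele, ← Finset.mul_sum, IH,
      cc_succ ha hb k, hg_succ a k, hg_succ b k]
    have hlast : (k : ℝ) + 1 - k = 1 := by ring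
    rw [hlast, div_one]
    linear_combination hfin - hrho0

lemma cc_bound {a b : ℝ} (ha : 0 < a) (hb : 0 < b) :
    ∃ B : ℝ, 0 < B ∧ ∀ k : ℕ, cc a b k ≤ B := by
  set M : ℝ := max 1 (a * b) with hM
  set N : ℕ := ⌈a * b⌉₊ with hN
  have hM1 : (1 : ℝ) ≤ M := le_max_left _ _
  have hMab : a * b ≤ M := le_max_right _ _
  have habM : a * b ≤ M * (a + b) := by
    rcases le_or_gt 1 (a + b) with h | h
    · calc a * b ≤ M := hMab
        _ = M * 1 := (mul_one M).symm
        _ ≤ M * (a + b) := by nlinarith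
    · have hab1 : a * b ≤ a + b := by nlinarith
      nlinarith
  refine ⟨M ^ N, by positivity, fun k => ?_⟩
  have main : ∀ k : ℕ, cc a b k ≤ M ^ (min k N) := by
    intro k
    induction k with
    | zero => simp [cc_zero]
    | succ k IH =>
      rw [cc_succ ha hb k]
      have hden : (0 : ℝ) < (1 + k) * ((a + b) + k) := by positivity
      rcases lt_or_ge k N with hk | hk
      · have hr : (a + k) * (b + k) / ((1 + k) * ((a + b) + k)) ≤ M := by
          rw [div_le_iff₀ hden]
          have hk0 : (0:ℝ) ≤ (k:ℝ) := Nat.cast_nonneg k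
          have e1 : (a + b) ≤ M * (a + b + 1) := by nlinarith
          have e2 : (a + b) * (k:ℝ) ≤ M * (a + b + 1) * k :=
            mul_le_mul_of_nonneg_right e1 hk0
          have e3 : (k:ℝ)^2 ≤ M * (k:ℝ)^2 := by nlinarith
          nlinarith [e2, e3, habM]
        have : cc a b (k + 1) ≤ M ^ (min k N) * M := by
          rw [cc_succ ha hb k]
          exact mul_le_mul IH hr (by positivity) (by positivity)
        rw [← cc_succ ha hb k]
        calc cc a b (k + 1) ≤ M ^ (min k N) * M := this
          _ = M ^ (min k N + 1) := (pow_succ M _).symm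
          _ = M ^ (min (k + 1) N) := by
              congr 1
              omega
      · have hkab : a * b ≤ (k : ℝ) := by
          calc a * b ≤ (N : ℝ) := Nat.le_ceil _
            _ ≤ (k : ℝ) := by exact_mod_cast hk
        have hr : (a + k) * (b + k) / ((1 + k) * ((a + b) + k)) ≤ 1 := by
          rw [div_le_one hden]
          nlinarith
        calc cc a b k * ((a + k) * (b + k) / ((1 + k) * ((a + b) + k)))
            ≤ cc a b k * 1 := by
              apply mul_le_mul_of_nonneg_left hr (cc_pos ha hb k).le
          _ = cc a b k := mul_one _
          _ ≤ M ^ (min k N) := IH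
          _ = M ^ (min (k + 1) N) := by congr 1; omega
  calc cc a b k ≤ M ^ (min k N) := main k
    _ ≤ M ^ N := pow_le_pow_right₀ hM1 (min_le_right _ _)

lemma hg_nonneg {a : ℝ} (ha : 0 < a) (k : ℕ) : 0 ≤ harmGen (a - 1) k := by
  apply Finset.sum_nonneg
  intro i _
  have : (0 : ℝ) < (a - 1) + ((i : ℝ) + 1) := by
    have : (0 : ℝ) ≤ (i : ℝ) := (Nat.cast_nonneg i : (0:ℝ) ≤ i)
    linarith
  positivity

lemma hg_le {a : ℝ} (ha : 0 < a) (k : ℕ) : harmGen (a - 1) k ≤ (k : ℝ) * (1 / a) := by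
  calc harmGen (a - 1) k ≤ ∑ _i ∈ Finset.range k, (1 / a) := by
        apply Finset.sum_le_sum
        intro i _
        have hpos : (0 : ℝ) < (a - 1) + ((i : ℝ) + 1) := by
          have : (0 : ℝ) ≤ (i : ℝ) := (Nat.cast_nonneg i : (0:ℝ) ≤ i)
          linarith
        apply div_le_div_of_nonneg_left one_pos.le ha
        have : (0 : ℝ) ≤ (i : ℝ) := (Nat.cast_nonneg i : (0:ℝ) ≤ i)
        linarith
    _ = (k : ℝ) * (1 / a) := by
        rw [Finset.sum_const, Finset.card_range, nsmul_eq_mul]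

set_option maxHeartbeats 2000000 in
theorem stmt_13 (a b : ℝ) (ha : 0 < a) (hb : 0 < b) (x : ℂ) (hx : ‖x‖ > 1) :
    Summable (fun k : ℕ =>
      ((poch a k * poch b k / (poch 1 k * poch (a + b) k) : ℝ) : ℂ) *
        ((harmGen (a - 1) k + harmGen (b - 1) k : ℝ) : ℂ) / x ^ k) ∧
    Summable (fun k : ℕ =>
      ((poch a k * poch b k / (poch 1 k * poch (a + b) k) : ℝ) : ℂ) / x ^ k) ∧
    ∑' k : ℕ, ((poch a k * poch b k / (poch 1 k * poch (a + b) k) : ℝ) : ℂ) *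
        ((harmGen (a - 1) k + harmGen (b - 1) k : ℝ) : ℂ) / x ^ k =
      Complex.log (x / (x - 1)) *
        ∑' k : ℕ, ((poch a k * poch b k / (poch 1 k * poch (a + b) k) : ℝ) : ℂ) / x ^ k := by
  have hx1 : (1 : ℝ) < ‖x‖ := hx
  set z : ℂ := x⁻¹ with hzdef
  have hz : ‖z‖ < 1 := by
    rw [hzdef, norm_inv]
    exact inv_lt_one_of_one_lt₀ hx1
  have hz0 : (0 : ℝ) ≤ ‖z‖ := norm_nonneg z
  obtain ⟨B, hB, hccB⟩ := cc_bound ha hb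
  have hsig_nonneg : ∀ k : ℕ, 0 ≤ harmGen (a - 1) k + harmGen (b - 1) k :=
    fun k => add_nonneg (hg_nonneg ha k) (hg_nonneg hb k)
  have hsig_le : ∀ k : ℕ, harmGen (a - 1) k + harmGen (b - 1) k ≤ (k : ℝ) * (1 / a + 1 / b) := by
    intro k
    have := hg_le ha k
    have := hg_le hb k
    nlinarith
  have hzx : ‖z‖ = ‖x‖⁻¹ := by rw [hzdef, norm_inv]
  -- term rewrites
  have hterm2 : ∀ k : ℕ, ((cc a b k : ℝ) : ℂ) / x ^ k = ((cc a b k : ℝ) : ℂ) * z ^ k := by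
    intro k; rw [div_eq_mul_inv, ← inv_pow, hzdef]
  have hterm1 : ∀ k : ℕ,
      ((cc a b k : ℝ) : ℂ) * ((harmGen (a - 1) k + harmGen (b - 1) k : ℝ) : ℂ) / x ^ k
        = ((cc a b k * (harmGen (a - 1) k + harmGen (b - 1) k) : ℝ) : ℂ) * z ^ k := by
    intro k; rw [div_eq_mul_inv, ← inv_pow, hzdef]; push_cast; ring
  -- norm-summability of the geometric factor series
  have hen : Summable (fun k : ℕ => ‖((cc a b k : ℝ) : ℂ) * z ^ k‖) := by
    apply Summable.of_nonneg_of_le (fun k => norm_nonneg _)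
      (f := fun k => B * ‖z‖ ^ k)
    · intro k
      rw [norm_mul, norm_pow, Complex.norm_real, Real.norm_eq_abs,
        abs_of_pos (cc_pos ha hb k)]
      exact mul_le_mul_of_nonneg_right (hccB k) (pow_nonneg hz0 k)
    · exact (summable_geometric_of_lt_one hz0 hz).mul_left B
  have hdn : Summable (fun n : ℕ => ‖z ^ n / (n : ℂ)‖) := by
    apply Summable.of_nonneg_of_le (fun k => norm_nonneg _)
      (f := fun k => ‖z‖ ^ k)
    · intro n
      match n with
      | 0 => simp
      | (m + 1) =>
        rw [norm_div, norm_pow]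
        have h1 : (1 : ℝ) ≤ ‖((m + 1 : ℕ) : ℂ)‖ := by
          rw [Complex.norm_natCast]
          exact_mod_cast Nat.one_le_iff_ne_zero.mpr (Nat.succ_ne_zero m)
        exact div_le_self (pow_nonneg hz0 _) h1
    · exact summable_geometric_of_lt_one hz0 hz
  -- summability of the two statement series (in cc form)
  have hsumm2 : Summable (fun k : ℕ => ((cc a b k : ℝ) : ℂ) / x ^ k) :=
    hen.of_norm.congr (fun k => (hterm2 k).symm)
  have hsumm1 : Summable (fun k : ℕ =>
      ((cc a b k : ℝ) : ℂ) * ((harmGen (a - 1) k + harmGen (b - 1) k : ℝ) : ℂ) / x ^ k) := by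
    have hgsum : Summable (fun k : ℕ => (B * (1 / a + 1 / b)) * ((k : ℝ) * ‖z‖ ^ k)) := by
      have h0 : Summable (fun n : ℕ => (n : ℝ) ^ 1 * ‖z‖ ^ n) :=
        summable_pow_mul_geometric_of_norm_lt_one 1
          (by rwa [Real.norm_eq_abs, abs_of_nonneg hz0])
      have := h0.mul_left (B * (1 / a + 1 / b))
      simpa using this
    apply Summable.of_norm_bounded hgsum
    intro k
    rw [norm_div, norm_mul, norm_pow, Complex.norm_real, Complex.norm_real,
        Real.norm_eq_abs, Real.norm_eq_abs, abs_of_pos (cc_pos ha hb k),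
        abs_of_nonneg (hsig_nonneg k), div_eq_mul_inv, ← inv_pow, ← hzx]
    have h1 : cc a b k * (harmGen (a - 1) k + harmGen (b - 1) k)
          ≤ B * ((k : ℝ) * (1 / a + 1 / b)) :=
        mul_le_mul (hccB k) (hsig_le k) (hsig_nonneg k) hB.le
    calc cc a b k * (harmGen (a - 1) k + harmGen (b - 1) k) * ‖z‖ ^ k
        ≤ B * ((k : ℝ) * (1 / a + 1 / b)) * ‖z‖ ^ k :=
          mul_le_mul_of_nonneg_right h1 (pow_nonneg hz0 k)
      _ = B * (1 / a + 1 / b) * ((k : ℝ) * ‖z‖ ^ k) := by ring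
  -- log series
  have hxne : x ≠ 0 := by
    intro h
    rw [h] at hx1
    simp at hx1
    linarith
  have h1z : (1 : ℂ) - z = (x - 1) / x := by
    rw [hzdef]
    field_simp
  have hargne : (1 - z).arg ≠ Real.pi := by
    have hre : 0 < (1 - z).re := by
      have h1 : |z.re| ≤ ‖z‖ := by
        exact Complex.abs_re_le_norm z
      have h2 : z.re ≤ ‖z‖ := le_trans (le_abs_self _) h1
      simp only [Complex.sub_re, Complex.one_re]
      linarith
    intro h
    rw [Complex.arg_eq_pi_iff] at h
    linarith [h.1]
  have hlogeq : Complex.log (x / (x - 1)) = -Complex.log (1 - z) := by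
    rw [show x / (x - 1) = ((x - 1) / x)⁻¹ by rw [inv_div], ← h1z,
      Complex.log_inv _ hargne]
  have hlog : HasSum (fun n : ℕ => z ^ n / (n : ℂ)) (Complex.log (x / (x - 1))) := by
    rw [hlogeq]
    exact Complex.hasSum_taylorSeries_neg_log hz
  -- inner antidiagonal sum computation
  have hinner : ∀ n : ℕ,
      ∑ kl ∈ Finset.HasAntidiagonal.antidiagonal n,
        (z ^ kl.1 / (kl.1 : ℂ)) * (((cc a b kl.2 : ℝ) : ℂ) * z ^ kl.2)
        = ((cc a b n * (harmGen (a - 1) n + harmGen (b - 1) n) : ℝ) : ℂ) * z ^ n := by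
    intro n
    rw [Finset.Nat.sum_antidiagonal_eq_sum_range_succ
      (fun i j => (z ^ i / (i : ℂ)) * (((cc a b j : ℝ) : ℂ) * z ^ j)) n]
    rw [Finset.sum_range_succ']
    have hzero : (z ^ 0 / ((0 : ℕ) : ℂ)) * (((cc a b (n - 0) : ℝ) : ℂ) * z ^ (n - 0)) = 0 := by
      simp
    rw [hzero, add_zero]
    have hterm : ∀ i ∈ Finset.range n,
        (z ^ (i + 1) / ((i + 1 : ℕ) : ℂ)) * (((cc a b (n - (i + 1)) : ℝ) : ℂ) * z ^ (n - (i + 1)))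
          = ((cc a b (n - 1 - i) / ((i : ℝ) + 1) : ℝ) : ℂ) * z ^ n := by
      intro i hi
      have hi' : i < n := Finset.mem_range.mp hi
      have hsub : n - (i + 1) = n - 1 - i := by omega
      have hzp : z ^ (i + 1) * z ^ (n - (i + 1)) = z ^ n := by
        rw [← pow_add]
        congr 1
        omega
      calc (z ^ (i + 1) / ((i + 1 : ℕ) : ℂ)) * (((cc a b (n - (i + 1)) : ℝ) : ℂ) * z ^ (n - (i + 1)))
          = (((cc a b (n - (i + 1)) : ℝ) : ℂ) / ((i + 1 : ℕ) : ℂ)) *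
              (z ^ (i + 1) * z ^ (n - (i + 1))) := by ring
        _ = ((cc a b (n - 1 - i) / ((i : ℝ) + 1) : ℝ) : ℂ) * z ^ n := by
            rw [hzp, hsub]
            push_cast
            ring
    rw [Finset.sum_congr rfl hterm, ← Finset.sum_mul]
    have hreal : ∑ i ∈ Finset.range n, cc a b (n - 1 - i) / ((i : ℝ) + 1)
        = cc a b n * (harmGen (a - 1) n + harmGen (b - 1) n) := by
      have hre : ∑ i ∈ Finset.range n, cc a b (n - 1 - i) / ((i : ℝ) + 1)
          = ∑ j ∈ Finset.range n, cc a b j / ((n : ℝ) - j) := by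
        rw [← Finset.sum_range_reflect (fun j => cc a b j / ((n : ℝ) - j)) n]
        apply Finset.sum_congr rfl
        intro j hj
        have hj' : j < n := Finset.mem_range.mp hj
        have hcast : ((n - 1 - j : ℕ) : ℝ) = (n : ℝ) - (1 + j) := by
          rw [Nat.sub_sub, Nat.cast_sub (by omega : 1 + j ≤ n)]
          push_cast
          ring
        simp only [hcast]
        congr 1
        ring
      rw [hre, key_s13 ha hb n]
    rw [← hreal]
    push_cast
    ring
  -- assemble
  have hmain : ∑' k : ℕ, ((cc a b k : ℝ) : ℂ) *
        ((harmGen (a - 1) k + harmGen (b - 1) k : ℝ) : ℂ) / x ^ k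
      = Complex.log (x / (x - 1)) * ∑' k : ℕ, ((cc a b k : ℝ) : ℂ) / x ^ k := by
    calc ∑' k : ℕ, ((cc a b k : ℝ) : ℂ) *
          ((harmGen (a - 1) k + harmGen (b - 1) k : ℝ) : ℂ) / x ^ k
        = ∑' k : ℕ, ((cc a b k * (harmGen (a - 1) k + harmGen (b - 1) k) : ℝ) : ℂ) * z ^ k :=
          tsum_congr hterm1
      _ = ∑' n : ℕ, ∑ kl ∈ Finset.HasAntidiagonal.antidiagonal n,
            (z ^ kl.1 / (kl.1 : ℂ)) * (((cc a b kl.2 : ℝ) : ℂ) * z ^ kl.2) :=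
          (tsum_congr hinner).symm
      _ = (∑' n : ℕ, z ^ n / (n : ℂ)) * ∑' k : ℕ, ((cc a b k : ℝ) : ℂ) * z ^ k :=
          (tsum_mul_tsum_eq_tsum_sum_antidiagonal_of_summable_norm hdn hen).symm
      _ = Complex.log (x / (x - 1)) * ∑' k : ℕ, ((cc a b k : ℝ) : ℂ) * z ^ k := by
          rw [hlog.tsum_eq]
      _ = Complex.log (x / (x - 1)) * ∑' k : ℕ, ((cc a b k : ℝ) : ℂ) / x ^ k := by
          rw [tsum_congr hterm2]
  exact ⟨hsumm1, hsumm2, hmain⟩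
end
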